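/- For p ≥ 1, define M_p(θ) = (2 - 2cos θ)^{p+1} ∑_{j∈ℤ} (θ + 2jπ)^{-2(p+1)} for θ ∈ (-π,π]∖{0}. Then lim_{θ→0} M_p(θ) = 1 and M_p(π) = 2(2^{2(p+1)} - 1) ζ(2(p+1))/π^{2(p+1)}. -/

import Mathlib

open Real Filter

/-- The Riemann zeta function for real `s > 1`, `ζ(s) = ∑_{n ≥ 1} n^{-s}`. -/
noncomputable def zetaR (s : ℝ) : ℝ := ∑' n : ℕ, 1 / (n + 1 : ℝ) ^ s

/-- The IgA mass symbol `M_p(θ) = (2 - 2cos θ)^{p+1} ∑_{j∈ℤ} (θ + 2jπ)^{-2(p+1)}`. -/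
noncomputable def Mp (p : ℕ) (θ : ℝ) : ℝ :=
  (2 - 2 * Real.cos θ) ^ (p + 1) * ∑' j : ℤ, 1 / (θ + 2 * j * π) ^ (2 * (p + 1))


lemma abs_lower (θ : ℝ) (hθ : |θ| ≤ π) {j : ℤ} (hj : j ≠ 0) :
    |(j:ℝ)| * π ≤ |θ + 2 * j * π| := by
  have h1 : (1:ℝ) ≤ |(j:ℝ)| := by
    rw [← Int.cast_abs]; exact_mod_cast Int.one_le_abs hj
  have h2 : |2 * (j:ℝ) * π| ≤ |θ + 2 * j * π| + |θ| := by
    calc |2 * (j:ℝ) * π| = |(θ + 2 * j * π) + (-θ)| := by ring_nf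
    _ ≤ |θ + 2 * j * π| + |-θ| := abs_add_le _ _
    _ = |θ + 2 * j * π| + |θ| := by rw [abs_neg]
  have h3 : |2 * (j:ℝ) * π| = 2 * |(j:ℝ)| * π := by
    rw [abs_mul, abs_mul, abs_two, abs_of_nonneg pi_pos.le]
  nlinarith [pi_pos]

lemma g_summable (k : ℕ) (hk : 1 ≤ k) :
    Summable (fun j : ℤ => 1 / π ^ (2*k) * (1 / (j:ℝ) ^ (2*k))) :=
  (summable_one_div_int_pow.mpr (by omega)).mul_left _

lemma g_nonneg (k : ℕ) (j : ℤ) : 0 ≤ 1 / π ^ (2*k) * (1 / (j:ℝ) ^ (2*k)) := by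
  have h1 : (0:ℝ) ≤ (j:ℝ) ^ (2*k) := (even_two_mul k).pow_nonneg _
  have h2 : (0:ℝ) ≤ π ^ (2*k) := by positivity
  positivity

lemma norm_f_le (k : ℕ) (θ : ℝ) (hθ : |θ| ≤ π) {j : ℤ} (hj : j ≠ 0) :
    ‖1 / (θ + 2 * j * π) ^ (2*k)‖ ≤ 1 / π ^ (2*k) * (1 / (j:ℝ) ^ (2*k)) := by
  have hb := abs_lower θ hθ hj
  have hjpos : (0:ℝ) < |(j:ℝ)| := abs_pos.mpr (by exact_mod_cast hj)
  have h1 : (0:ℝ) < (|(j:ℝ)| * π) ^ (2*k) := by positivity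
  have h2 : ‖1 / (θ + 2 * j * π) ^ (2*k)‖ = 1 / |θ + 2 * j * π| ^ (2*k) := by
    rw [Real.norm_eq_abs, abs_div, abs_one, abs_pow]
  rw [h2]
  calc 1 / |θ + 2 * j * π| ^ (2*k) ≤ 1 / (|(j:ℝ)| * π) ^ (2*k) := by
        apply one_div_le_one_div_of_le h1
        exact pow_le_pow_left₀ (by positivity) hb _
    _ = 1 / π ^ (2*k) * (1 / (j:ℝ) ^ (2*k)) := by
        rw [mul_pow, ← ((even_two_mul k).pow_abs (j:ℝ))]
        rw [one_div, mul_inv, one_div, one_div, mul_comm]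

lemma f_summable (k : ℕ) (hk : 1 ≤ k) (θ : ℝ) (hθ : |θ| ≤ π) :
    Summable (fun j : ℤ => 1 / (θ + 2 * j * π) ^ (2*k)) := by
  apply Summable.of_norm_bounded_eventually (g_summable k hk)
  filter_upwards [eventually_cofinite_ne 0] with j hj
  exact norm_f_le k θ hθ hj

lemma fT_summable (k : ℕ) (hk : 1 ≤ k) (θ : ℝ) (hθ : |θ| ≤ π) :
    Summable (fun j : ℤ => if j = 0 then 0 else 1 / (θ + 2 * j * π) ^ (2*k)) := by
  apply Summable.of_norm_bounded_eventually (g_summable k hk)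
  filter_upwards [eventually_cofinite_ne 0] with j hj
  simp only [hj, if_false]
  exact norm_f_le k θ hθ hj

lemma T_nonneg (k : ℕ) (θ : ℝ) :
    0 ≤ ∑' j : ℤ, (if j = 0 then 0 else 1 / (θ + 2 * j * π) ^ (2*k)) := by
  apply tsum_nonneg
  intro j
  by_cases h : j = 0
  · simp [h]
  · simp only [h, if_false]
    exact one_div_nonneg.mpr ((even_two_mul k).pow_nonneg _)

lemma T_le_C (k : ℕ) (hk : 1 ≤ k) (θ : ℝ) (hθ : |θ| ≤ π) :
    ∑' j : ℤ, (if j = 0 then 0 else 1 / (θ + 2 * j * π) ^ (2*k)) ≤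
      ∑' j : ℤ, 1 / π ^ (2*k) * (1 / (j:ℝ) ^ (2*k)) := by
  apply Summable.tsum_le_tsum _ (fT_summable k hk θ hθ) (g_summable k hk)
  intro j
  by_cases h : j = 0
  · simp only [h, if_true]; exact g_nonneg k 0
  · simp only [h, if_false]
    have := norm_f_le k θ hθ h
    rw [Real.norm_eq_abs] at this
    exact (le_abs_self _).trans this

lemma sin_div_tendsto : Tendsto (fun θ : ℝ => Real.sin θ / θ) (nhdsWithin 0 {(0:ℝ)}ᶜ) (nhds 1) := by
  have h := (Real.hasDerivAt_sin 0)
  rw [hasDerivAt_iff_tendsto_slope] at h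
  rw [Real.cos_zero] at h
  apply h.congr'
  filter_upwards [self_mem_nhdsWithin] with θ hθ
  simp [slope_def_field, Real.sin_zero]

lemma half_tendsto : Tendsto (fun θ : ℝ => θ / 2) (nhdsWithin 0 {(0:ℝ)}ᶜ) (nhdsWithin 0 {(0:ℝ)}ᶜ) := by
  rw [tendsto_nhdsWithin_iff]
  constructor
  · have : Tendsto (fun θ : ℝ => θ / 2) (nhds 0) (nhds (0/2)) :=
      (continuous_id.div_const 2).tendsto 0
    simpa using this.mono_left nhdsWithin_le_nhds
  · filter_upwards [self_mem_nhdsWithin] with θ hθ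
    simp only [Set.mem_compl_iff, Set.mem_singleton_iff] at hθ ⊢
    exact div_ne_zero hθ two_ne_zero

lemma cos_ratio_tendsto :
    Tendsto (fun θ : ℝ => Real.sin (θ/2) / (θ/2)) (nhdsWithin 0 {(0:ℝ)}ᶜ) (nhds 1) :=
  sin_div_tendsto.comp half_tendsto

lemma two_sub_cos (θ : ℝ) : 2 - 2 * Real.cos θ = 4 * Real.sin (θ/2) ^ 2 := by
  have h1 : Real.cos θ = 2 * Real.cos (θ/2) ^ 2 - 1 := by
    rw [show θ = 2 * (θ/2) by ring, Real.cos_two_mul]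
    ring_nf
  have h2 := Real.sin_sq_add_cos_sq (θ/2)
  nlinarith

lemma part1 (k : ℕ) (hk : 1 ≤ k) :
    Tendsto (fun θ : ℝ => (2 - 2 * Real.cos θ) ^ k * ∑' j : ℤ, 1 / (θ + 2 * j * π) ^ (2 * k))
      (nhdsWithin 0 {(0:ℝ)}ᶜ) (nhds 1) := by
  set C : ℝ := ∑' j : ℤ, 1 / π ^ (2*k) * (1 / (j:ℝ) ^ (2*k)) with hC
  set T : ℝ → ℝ := fun θ => ∑' j : ℤ, (if j = 0 then 0 else 1 / (θ + 2 * j * π) ^ (2*k)) with hT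
  have hπ : ∀ᶠ θ : ℝ in nhdsWithin 0 {(0:ℝ)}ᶜ, |θ| ≤ π := by
    apply eventually_nhdsWithin_of_eventually_nhds
    filter_upwards [Metric.ball_mem_nhds (0:ℝ) pi_pos] with θ hθ
    rw [Metric.mem_ball, Real.dist_eq, sub_zero] at hθ
    exact hθ.le
  have hA : Tendsto (fun θ : ℝ => (Real.sin (θ/2) / (θ/2)) ^ (2*k))
      (nhdsWithin 0 {(0:ℝ)}ᶜ) (nhds 1) := by
    simpa using cos_ratio_tendsto.pow (2*k)
  have hB : Tendsto (fun θ : ℝ => θ ^ (2*k) * T θ) (nhdsWithin 0 {(0:ℝ)}ᶜ) (nhds 0) := by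
    apply squeeze_zero_norm' (a := fun θ => |θ| ^ (2*k) * C)
    · filter_upwards [hπ] with θ hθ
      rw [Real.norm_eq_abs, abs_mul, abs_pow]
      apply mul_le_mul_of_nonneg_left _ (by positivity)
      rw [abs_of_nonneg (T_nonneg k θ)]
      exact T_le_C k hk θ hθ
    · have hc : Continuous (fun θ : ℝ => |θ| ^ (2*k) * C) :=
        ((continuous_abs.pow (2*k)).mul continuous_const)
      have := (hc.tendsto 0).mono_left (nhdsWithin_le_nhds (s := {(0:ℝ)}ᶜ))
      simpa [zero_pow (by omega : 2*k ≠ 0)] using this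
  have hF : Tendsto (fun θ : ℝ => (Real.sin (θ/2) / (θ/2)) ^ (2*k) * (1 + θ ^ (2*k) * T θ))
      (nhdsWithin 0 {(0:ℝ)}ᶜ) (nhds 1) := by
    have := hA.mul ((tendsto_const_nhds (x := (1:ℝ))).add hB)
    simpa using this
  apply hF.congr'
  filter_upwards [hπ, self_mem_nhdsWithin] with θ hθ hθ0
  simp only [Set.mem_compl_iff, Set.mem_singleton_iff] at hθ0
  have hsum := f_summable k hk θ hθ
  have hsplit := Summable.tsum_eq_add_tsum_ite hsum 0
  have h00 : 1 / (θ + 2 * ((0:ℤ):ℝ) * π) ^ (2*k) = 1 / θ ^ (2*k) := by push_cast; ring_nf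
  rw [hsplit, h00]
  have hTθ : (∑' (n : ℤ), if n = 0 then 0 else 1 / (θ + 2 * (n:ℝ) * π) ^ (2*k)) = T θ := rfl
  rw [hTθ]
  have hθpow : θ ^ (2*k) ≠ 0 := pow_ne_zero _ hθ0
  have e1 : (Real.sin (θ/2) / (θ/2)) ^ (2*k) = (2 - 2 * Real.cos θ) ^ k / θ ^ (2*k) := by
    rw [two_sub_cos, pow_mul, pow_mul, div_pow]
    congr 1
    field_simp
    have hθθ : θ ^ (k*2) * θ⁻¹ ^ (k*2) = 1 := by rw [← mul_pow, mul_inv_cancel₀ hθ0, one_pow]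
    linear_combination (Real.sin (θ / 2) ^ (k*2) * 4^k) * hθθ
  have key : ∀ A t : ℝ, A / θ ^ (2*k) * (1 + θ ^ (2*k) * t) = A * (1 / θ ^ (2*k) + t) := by
    intro A t
    field_simp
  rw [e1, key]

lemma Zs (k : ℕ) (hk : 1 ≤ k) : Summable (fun n : ℕ => 1 / ((n:ℝ) + 1) ^ (2*k)) := by
  have h := summable_one_div_nat_pow.mpr (show 1 < 2*k by omega)
  have := h.comp_injective (add_left_injective 1)
  apply this.congr
  intro n
  simp only [Function.comp]
  push_cast
  ring_nf

lemma Os (k : ℕ) (hk : 1 ≤ k) : Summable (fun n : ℕ => 1 / (2 * (n:ℝ) + 1) ^ (2*k)) := by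
  apply Summable.of_nonneg_of_le _ _ (Zs k hk)
  · intro n; positivity
  · intro n
    apply one_div_le_one_div_of_le (by positivity)
    apply pow_le_pow_left₀ (by positivity)
    linarith [Nat.cast_nonneg (α := ℝ) n]

lemma odd_sum (k : ℕ) (hk : 1 ≤ k) :
    ∑' n : ℕ, 1 / (2 * (n:ℝ) + 1) ^ (2*k) =
      (1 - 1 / 2 ^ (2*k)) * ∑' n : ℕ, 1 / ((n:ℝ) + 1) ^ (2*k) := by
  set Z : ℝ := ∑' n : ℕ, 1 / ((n:ℝ) + 1) ^ (2*k) with hZ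
  have he : Summable (fun n : ℕ => 1 / (((2*n : ℕ):ℝ) + 1) ^ (2*k)) := by
    apply (Os k hk).congr
    intro n; push_cast; ring_nf
  have ho : Summable (fun n : ℕ => 1 / (((2*n+1 : ℕ):ℝ) + 1) ^ (2*k)) := by
    apply ((Zs k hk).mul_left (1 / 2 ^ (2*k))).congr
    intro n
    push_cast
    rw [show (2:ℝ) * n + 1 + 1 = 2 * (n + 1) by ring, mul_pow]
    rw [div_mul_div_comm, one_mul]
  have key := tsum_even_add_odd (f := fun n : ℕ => 1 / ((n:ℝ) + 1) ^ (2*k)) he ho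
  have e1 : ∑' n : ℕ, 1 / (((2*n : ℕ):ℝ) + 1) ^ (2*k) = ∑' n : ℕ, 1 / (2 * (n:ℝ) + 1) ^ (2*k) := by
    apply tsum_congr; intro n; push_cast; ring_nf
  have e2 : ∑' n : ℕ, 1 / (((2*n+1 : ℕ):ℝ) + 1) ^ (2*k) = 1 / 2 ^ (2*k) * Z := by
    rw [← tsum_mul_left]
    apply tsum_congr; intro n
    push_cast
    rw [show (2:ℝ) * n + 1 + 1 = 2 * (n + 1) by ring, mul_pow]
    rw [div_mul_div_comm, one_mul]
  rw [e1, e2] at key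
  linarith [key]

set_option maxHeartbeats 1000000 in
lemma int_odd_sum (k : ℕ) (hk : 1 ≤ k) :
    ∑' j : ℤ, 1 / (2 * (j:ℝ) + 1) ^ (2*k) = 2 * ∑' n : ℕ, 1 / (2 * (n:ℝ) + 1) ^ (2*k) := by
  have h1 : Summable (fun n : ℕ => 1 / (2 * ((n:ℤ):ℝ) + 1) ^ (2*k)) := by
    apply (Os k hk).congr; intro n; push_cast; ring_nf
  have h2 : Summable (fun n : ℕ => 1 / (2 * ((-(n+1) : ℤ):ℝ) + 1) ^ (2*k)) := by
    apply (Os k hk).congr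
    intro n
    push_cast
    rw [show 2 * (-((n:ℝ) + 1)) + 1 = -(2 * n + 1) by ring, (even_two_mul k).neg_pow]
  rw [tsum_of_nat_of_neg_add_one (f := fun j : ℤ => 1 / (2 * (j:ℝ) + 1) ^ (2*k)) h1 h2]
  have e1 : ∑' n : ℕ, 1 / (2 * ((n:ℤ):ℝ) + 1) ^ (2*k) = ∑' n : ℕ, 1 / (2 * (n:ℝ) + 1) ^ (2*k) := by
    apply tsum_congr; intro n; push_cast; ring_nf
  have e2 : ∑' n : ℕ, 1 / (2 * ((-(n+1) : ℤ):ℝ) + 1) ^ (2*k) =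
      ∑' n : ℕ, 1 / (2 * (n:ℝ) + 1) ^ (2*k) := by
    apply tsum_congr
    intro n
    push_cast
    rw [show 2 * (-((n:ℝ) + 1)) + 1 = -(2 * n + 1) by ring, (even_two_mul k).neg_pow]
  rw [e1, e2]
  ring

/-- For `p ≥ 1`, `lim_{θ→0} M_p(θ) = 1` and
`M_p(π) = 2(2^{2(p+1)} - 1) ζ(2(p+1))/π^{2(p+1)}`. -/
theorem Mp_values (p : ℕ) (hp : 1 ≤ p) :
    Tendsto (Mp p) (nhdsWithin 0 {(0 : ℝ)}ᶜ) (nhds 1) ∧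
    Mp p π = 2 * (2 ^ (2 * (p + 1)) - 1) * zetaR (2 * (p + 1)) / π ^ (2 * (p + 1)) := by
  constructor
  · exact part1 (p + 1) (by omega)
  · set k := p + 1 with hk
    have hk1 : 1 ≤ k := by omega
    set Z : ℝ := ∑' n : ℕ, 1 / ((n:ℝ) + 1) ^ (2*k) with hZ
    have hzeta : zetaR (2 * (p + 1)) = Z := by
      rw [zetaR, hZ]
      apply tsum_congr
      intro n
      congr 1
      rw [show (2 * ((p:ℝ) + 1)) = ((2*k : ℕ):ℝ) by push_cast [hk]; ring]
      rw [Real.rpow_natCast]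
    have hπ0 : (π : ℝ) ≠ 0 := pi_ne_zero
    have h2m : (2:ℝ) ^ (2*k) ≠ 0 := by positivity
    have hsum : (∑' j : ℤ, 1 / (π + 2 * (j:ℝ) * π) ^ (2*k)) =
        1 / π ^ (2*k) * ∑' j : ℤ, 1 / (2 * (j:ℝ) + 1) ^ (2*k) := by
      rw [← tsum_mul_left]
      apply tsum_congr
      intro j
      rw [show π + 2 * (j:ℝ) * π = (2 * j + 1) * π by ring, mul_pow]
      rw [div_mul_div_comm, one_mul, mul_comm]
    have hMp : Mp p π = 4 ^ k * (1 / π ^ (2*k) * (2 * ((1 - 1 / 2 ^ (2*k)) * Z))) := by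
      rw [Mp, Real.cos_pi]
      rw [show (2 : ℝ) - 2 * (-1) = 4 by norm_num]
      rw [hsum, int_odd_sum k hk1, odd_sum k hk1]
    rw [hMp, hzeta]
    rw [show (4:ℝ) ^ k = 2 ^ (2*k) by rw [show (4:ℝ) = 2^2 by norm_num, ← pow_mul]]
    field_simp
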